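/- If 𝔅_3, the exploded sum of two collections 𝔅_1, 𝔅_2 of admissible n-subsets of [n] ∪ [n]*, satisfies the Strong Exchange Property on [n+1] ∪ [n+1]*, then 𝔅_1 ∪ 𝔅_2 satisfies the Symmetric Exchange Axiom for Lagrangian symplectic matroids: for all A, B ∈ 𝔅_1 ∪ 𝔅_2 and a ∈ A △ B, there exists b ∈ A △ B (possibly b = a*) such that A △ {a, a*, b, b*} ∈ 𝔅_1 ∪ 𝔅_2. -/
import Mathlib


/-- `J n` models `[n] ∪ [n]*` : the element `(i, false)` is `i` and `(i, true)` is `i*`. -/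
abbrev J (n : ℕ) := Fin n × Bool

/-- The star involution `i ↦ i*`, `i* ↦ i`. -/
def jstar {n : ℕ} (x : J n) : J n := (x.1, !x.2)

/-- `K* = { k* : k ∈ K }`. -/
def starSet {n : ℕ} (K : Finset (J n)) : Finset (J n) := K.image jstar

/-- A subset `K ⊆ [n] ∪ [n]*` is admissible if `K ∩ K* = ∅`. -/
def Admissible {n : ℕ} (K : Finset (J n)) : Prop := K ∩ starSet K = ∅

/-- The Strong Exchange Property for a collection of subsets of `[n] ∪ [n]*`. -/
def StrongExchange {n : ℕ} (𝔅 : Set (Finset (J n))) : Prop :=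
  ∀ A ∈ 𝔅, ∀ C ∈ 𝔅, ∀ a ∈ symmDiff A C, ∃ b ∈ C \ A, b ≠ jstar a ∧
    symmDiff A {a, b, jstar a, jstar b} ∈ 𝔅 ∧ symmDiff C {a, b, jstar a, jstar b} ∈ 𝔅

/-- Inclusion of `[n] ∪ [n]*` into `[n+1] ∪ [n+1]*`. -/
def jlift {n : ℕ} (x : J n) : J (n + 1) := (x.1.castSucc, x.2)

/-- The exploded sum `𝔅₃` of two collections of admissible `n`-subsets of `[n] ∪ [n]*`:
`{B ∪ {n+1} : B ∈ 𝔅₁} ∪ {B ∪ {(n+1)*} : B ∈ 𝔅₂}`. -/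
def explodedSum {n : ℕ} (𝔅₁ 𝔅₂ : Set (Finset (J n))) : Set (Finset (J (n + 1))) :=
  {C | ∃ B ∈ 𝔅₁, C = insert (Fin.last n, false) (B.image jlift)} ∪
  {C | ∃ B ∈ 𝔅₂, C = insert (Fin.last n, true) (B.image jlift)}

/-- The Symmetric Exchange Axiom for Lagrangian symplectic matroids. -/
def SymExchange {n : ℕ} (𝔅 : Set (Finset (J n))) : Prop :=
  ∀ A ∈ 𝔅, ∀ C ∈ 𝔅, ∀ a ∈ symmDiff A C, ∃ b ∈ symmDiff A C,
    symmDiff A {a, jstar a, b, jstar b} ∈ 𝔅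


section Aux

open Finset

lemma jlift_injective {n : ℕ} : Function.Injective (@jlift n) := by
  intro x y h
  simp only [jlift, Prod.mk.injEq, Fin.castSucc_inj] at h
  exact Prod.ext h.1 h.2

@[simp] lemma jlift_inj_iff {n : ℕ} {x y : J n} : jlift x = jlift y ↔ x = y :=
  jlift_injective.eq_iff

lemma jstar_jlift {n : ℕ} (x : J n) : jstar (jlift x) = jlift (jstar x) := rfl

@[simp] lemma jlift_ne_last {n : ℕ} (x : J n) (ε : Bool) : jlift x ≠ (Fin.last n, ε) := by
  intro h
  have := congrArg Prod.fst h
  simp only [jlift] at this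
  exact (Fin.castSucc_lt_last x.1).ne this

lemma last_not_mem_image {n : ℕ} (ε : Bool) (B : Finset (J n)) :
    (Fin.last n, ε) ∉ B.image jlift := by
  simp only [mem_image]
  rintro ⟨x, -, h⟩
  exact jlift_ne_last x ε h

lemma last_not_mem_image_any {n : ℕ} (b : Bool) (B : Finset (J n)) :
    (Fin.last n, b) ∉ B.image jlift := last_not_mem_image b B

@[simp] lemma mem_image_jlift {n : ℕ} (x : J n) (B : Finset (J n)) :
    jlift x ∈ B.image jlift ↔ x ∈ B := by
  constructor
  · intro h
    obtain ⟨y, hy, he⟩ := mem_image.1 h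
    rwa [← jlift_injective he]
  · intro h
    exact mem_image_of_mem _ h

lemma symmDiff_insert_left {α : Type*} [DecidableEq α] {x : α} {s t : Finset α}
    (h : x ∉ s) : symmDiff (insert x t) s = insert x (symmDiff t s) := by
  ext y
  by_cases hy : y = x
  · subst hy
    simp [Finset.mem_symmDiff, h]
  · simp only [Finset.mem_symmDiff, mem_insert, hy, false_or]

/-- Lift a subset of `[n] ∪ [n]*` into `[n+1] ∪ [n+1]*` adding marker `(last, ε)`. -/
def lift {n : ℕ} (ε : Bool) (B : Finset (J n)) : Finset (J (n + 1)) :=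
  insert (Fin.last n, ε) (B.image jlift)

lemma lift_inj_aux {n : ℕ} {ε ε' : Bool} {X B : Finset (J n)}
    (h : lift ε X = lift ε' B) : ε = ε' ∧ X = B := by
  have hε : ε = ε' := by
    have hm : (Fin.last n, ε) ∈ lift ε' B := h ▸ mem_insert_self _ _
    rcases mem_insert.1 hm with h1 | h1
    · exact (Prod.mk.injEq _ _ _ _ ▸ h1).2
    · exact absurd h1 (last_not_mem_image ε B)
  subst hε
  refine ⟨rfl, ?_⟩
  have himg : X.image jlift = B.image jlift := by
    have h2 : (lift ε X).erase (Fin.last n, ε) = (lift ε B).erase (Fin.last n, ε) := by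
      rw [h]
    rwa [lift, lift, Finset.erase_insert (last_not_mem_image ε X),
      Finset.erase_insert (last_not_mem_image ε B)] at h2
  exact Finset.image_injective jlift_injective himg

lemma lift_mem_union {n : ℕ} {𝔅₁ 𝔅₂ : Set (Finset (J n))} {ε : Bool} {Y : Finset (J n)}
    (h : lift ε Y ∈ explodedSum 𝔅₁ 𝔅₂) : Y ∈ 𝔅₁ ∪ 𝔅₂ := by
  rcases h with ⟨B, hB, hEq⟩ | ⟨B, hB, hEq⟩
  · obtain ⟨-, h2⟩ := lift_inj_aux (ε' := false) (B := B) hEq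
    exact Or.inl (h2 ▸ hB)
  · obtain ⟨-, h2⟩ := lift_inj_aux (ε' := true) (B := B) hEq
    exact Or.inr (h2 ▸ hB)

end Aux

/-- if the exploded sum `𝔅₃` of `𝔅₁`, `𝔅₂` satisfies the Strong Exchange
Property on `[n+1] ∪ [n+1]*`, then `𝔅₁ ∪ 𝔅₂` satisfies the Symmetric Exchange Axiom. -/
theorem exploded_sum_implies_sym_exchange (n : ℕ) (𝔅₁ 𝔅₂ : Set (Finset (J n)))
    (hadm₁ : ∀ B ∈ 𝔅₁, Admissible B ∧ B.card = n)
    (hadm₂ : ∀ B ∈ 𝔅₂, Admissible B ∧ B.card = n)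
    (hSE : StrongExchange (explodedSum 𝔅₁ 𝔅₂)) :
    SymExchange (𝔅₁ ∪ 𝔅₂) := by
  classical
  intro A hA C hC a ha
  obtain ⟨εA, hA'⟩ : ∃ ε, lift ε A ∈ explodedSum 𝔅₁ 𝔅₂ := by
    rcases hA with h | h
    · exact ⟨false, Or.inl ⟨A, h, rfl⟩⟩
    · exact ⟨true, Or.inr ⟨A, h, rfl⟩⟩
  obtain ⟨εC, hC'⟩ : ∃ ε, lift ε C ∈ explodedSum 𝔅₁ 𝔅₂ := by
    rcases hC with h | h
    · exact ⟨false, Or.inl ⟨C, h, rfl⟩⟩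
    · exact ⟨true, Or.inr ⟨C, h, rfl⟩⟩
  have ha' : jlift a ∈ symmDiff (lift εA A) (lift εC C) := by
    rw [Finset.mem_symmDiff] at ha ⊢
    rcases ha with ⟨h1, h2⟩ | ⟨h1, h2⟩
    · refine Or.inl ⟨Finset.mem_insert_of_mem (Finset.mem_image_of_mem _ h1), ?_⟩
      simp [lift, h2]
    · refine Or.inr ⟨Finset.mem_insert_of_mem (Finset.mem_image_of_mem _ h1), ?_⟩
      simp [lift, h2]
  obtain ⟨b', hb'mem, hne, hD, -⟩ := hSE _ hA' _ hC' _ ha'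
  rw [Finset.mem_sdiff] at hb'mem
  obtain ⟨hb'C, hb'A⟩ := hb'mem
  rcases Finset.mem_insert.1 hb'C with hbl | hbi
  · -- Case 2: b' is the marker (last, εC); take b = a.
    subst hbl
    have hεne : εA ≠ εC := by
      intro h
      exact hb'A (h ▸ Finset.mem_insert_self _ _)
    have hεA : εA = !εC := by
      cases εA <;> cases εC <;> simp_all
    subst hεA
    have hml : ∀ (z : J n) (ε : Bool) (S : Finset (J n)), jlift z ∈ lift ε S ↔ z ∈ S := by
      intro z ε S
      simp [lift, jlift_ne_last]
    have hmlast : ∀ (b ε : Bool) (S : Finset (J n)),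
        ((Fin.last n, b) : J (n + 1)) ∈ lift ε S ↔ b = ε := by
      intro b ε S
      constructor
      · intro h
        rcases Finset.mem_insert.1 h with h | h
        · exact (Prod.mk.injEq _ _ _ _ ▸ h).2
        · exact absurd h (last_not_mem_image_any b S)
      · rintro rfl
        exact Finset.mem_insert_self _ _
    have hkey : symmDiff (lift (!εC) A) {jlift a, (Fin.last n, εC), jstar (jlift a),
        jstar (Fin.last n, εC)} = lift εC (symmDiff A {a, jstar a}) := by
      have hstar : jstar ((Fin.last n, εC) : J (n + 1)) = (Fin.last n, !εC) := rfl
      ext y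
      obtain ⟨y1, y2⟩ := y
      rcases Fin.eq_castSucc_or_eq_last y1 with ⟨j, hj⟩ | hj
      · subst hj
        have hy : ((j.castSucc, y2) : J (n + 1)) = jlift (j, y2) := rfl
        rw [hy]
        have hm4 : jlift ((j, y2) : J n) ∈ ({jlift a, (Fin.last n, εC), jstar (jlift a),
            jstar (Fin.last n, εC)} : Finset (J (n + 1))) ↔ (j, y2) = a ∨ (j, y2) = jstar a := by
          rw [hstar, jstar_jlift]
          simp [jlift_ne_last]
        rw [Finset.mem_symmDiff, hm4, hml, hml, Finset.mem_symmDiff]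
        simp only [Finset.mem_insert, Finset.mem_singleton]
      · subst hj
        have hm4 : ((Fin.last n, y2) : J (n + 1)) ∈ ({jlift a, (Fin.last n, εC),
            jstar (jlift a), jstar (Fin.last n, εC)} : Finset (J (n + 1))) ↔
            y2 = εC ∨ y2 = !εC := by
          constructor
          · intro h
            rcases Finset.mem_insert.1 h with h | h
            · exact absurd h.symm (jlift_ne_last a y2)
            rcases Finset.mem_insert.1 h with h | h
            · exact Or.inl (Prod.mk.injEq _ _ _ _ ▸ h).2
            rcases Finset.mem_insert.1 h with h | h
            · rw [jstar_jlift] at h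
              exact absurd h.symm (jlift_ne_last (jstar a) y2)
            · rw [Finset.mem_singleton, hstar] at h
              exact Or.inr (Prod.mk.injEq _ _ _ _ ▸ h).2
          · rintro (h | h)
            · subst h
              exact Finset.mem_insert_of_mem (Finset.mem_insert_self _ _)
            · subst h
              refine Finset.mem_insert_of_mem (Finset.mem_insert_of_mem
                (Finset.mem_insert_of_mem ?_))
              rw [Finset.mem_singleton, hstar]
        rw [Finset.mem_symmDiff, hm4, hmlast, hmlast]
        have h5 : (y2 = !εC) ↔ ¬(y2 = εC) := by
          cases y2 <;> cases εC <;> simp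
        rw [h5]
        tauto
    rw [hkey] at hD
    have hmem := lift_mem_union hD
    refine ⟨a, ha, ?_⟩
    have hset : ({a, jstar a, a, jstar a} : Finset (J n)) = {a, jstar a} := by
      ext x
      simp only [Finset.mem_insert, Finset.mem_singleton]
      tauto
    rw [hset]
    exact hmem
  · -- Case 1: b' = jlift b for some b ∈ C \ A.
    obtain ⟨b, hbC, rfl⟩ := Finset.mem_image.1 hbi
    have hbA : b ∉ A := fun h =>
      hb'A (Finset.mem_insert_of_mem (Finset.mem_image_of_mem _ h))
    have hbAC : b ∈ symmDiff A C := Finset.mem_symmDiff.2 (Or.inr ⟨hbC, hbA⟩)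
    have hset : ({jlift a, jlift b, jstar (jlift a), jstar (jlift b)} : Finset (J (n+1)))
        = ({a, b, jstar a, jstar b} : Finset (J n)).image jlift := by
      simp [Finset.image_insert, jstar_jlift]
    rw [hset] at hD
    have hkey : symmDiff (lift εA A) (({a, b, jstar a, jstar b} : Finset (J n)).image jlift)
        = lift εA (symmDiff A {a, b, jstar a, jstar b}) := by
      rw [lift, symmDiff_insert_left (last_not_mem_image _ _), ← Finset.image_symmDiff _ _ jlift_injective]
      rfl
    rw [hkey] at hD
    have hmem := lift_mem_union hD
    refine ⟨b, hbAC, ?_⟩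
    have hset2 : ({a, jstar a, b, jstar b} : Finset (J n)) = {a, b, jstar a, jstar b} := by
      ext x
      simp only [Finset.mem_insert, Finset.mem_singleton]
      tauto
    rw [hset2]
    exact hmem
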